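/- For every ε > 0 there exists δ > 0 (depending only on ε and V) such that the following holds. Let V = E₀ ⊕ ⋯ ⊕ E_s be any direct-sum decomposition of V into nonzero subspaces with κ(E₀,…,E_s) ≥ ε, let 0 ≤ i < s, and write Wⁱ = E₀ ⊕ ⋯ ⊕ E_i and Vⁱ = E_{i+1} ⊕ ⋯ ⊕ E_s. Then for all w ∈ Wⁱ with ε ≤ |w| ≤ ε^{-1} and all v₁, v₂ ∈ Vⁱ with |v₁| ≤ ε^{-1}: ‖(w + v₁) ∧ v₂‖ ≥ δ · |w + v₁| · |v₂|. -/

import Mathlib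

open scoped RealInnerProductSpace
open Filter

variable {V : Type*} [NormedAddCommGroup V] [InnerProductSpace ℝ V]

/-- The projective distance between the lines spanned by two nonzero vectors:
`d(x̄, ȳ) = (1 − ⟨x,y⟫²/(|x|²|y|²))^{1/2}`. -/
noncomputable def projDist (x y : V) : ℝ :=
  Real.sqrt (1 - ⟪x, y⟫ ^ 2 / (‖x‖ ^ 2 * ‖y‖ ^ 2))

/-- The distance `d(x̄, P(W))` from the line spanned by `x` to the projective space of the
submodule `W`. -/
noncomputable def projDistToSub (x : V) (W : Submodule ℝ V) : ℝ :=
  sInf {r : ℝ | ∃ y : V, y ∈ W ∧ y ≠ 0 ∧ r = projDist x y}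

/-- `κ(E₀,…,E_s)`: the minimal projective distance between nonzero vectors lying in sums of
disjoint subfamilies of the `E i`. -/
noncomputable def kappa {ι : Type*} (E : ι → Submodule ℝ V) : ℝ :=
  sInf {r : ℝ | ∃ (I J : Finset ι) (x y : V), I.Nonempty ∧ J.Nonempty ∧ Disjoint I J ∧
    x ∈ (⨆ i ∈ I, E i) ∧ x ≠ 0 ∧ y ∈ (⨆ j ∈ J, E j) ∧ y ≠ 0 ∧ r = projDist x y}

/-- `Vⁱ = E_{i+1} ⊕ ⋯ ⊕ E_s`. -/
noncomputable def Vlow {s : ℕ} (E : Fin (s+1) → Submodule ℝ V) (i : ℕ) : Submodule ℝ V :=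
  ⨆ j : Fin (s+1), ⨆ _ : i < (j : ℕ), E j

/-- `Wⁱ = E₀ ⊕ ⋯ ⊕ E_i`. -/
noncomputable def Whigh {s : ℕ} (E : Fin (s+1) → Submodule ℝ V) (i : ℕ) : Submodule ℝ V :=
  ⨆ j : Fin (s+1), ⨆ _ : (j : ℕ) ≤ i, E j

/-- `‖x ∧ y‖ = (|x|²|y|² − ⟨x,y⟫²)^{1/2}`, the area of the parallelogram spanned by `x, y`. -/
noncomputable def wedgeNorm (x y : V) : ℝ :=
  Real.sqrt (‖x‖ ^ 2 * ‖y‖ ^ 2 - ⟪x, y⟫ ^ 2)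

/-- Lemma 5.4 of the paper. For every `ε > 0` there is `δ > 0` such that
for every splitting `V = E₀ ⊕ ⋯ ⊕ E_s` with `κ(E₀,…,E_s) ≥ ε`, every `0 ≤ i < s`, every
`w ∈ Wⁱ` with `ε ≤ |w| ≤ ε⁻¹` and all `v₁, v₂ ∈ Vⁱ` with `|v₁| ≤ ε⁻¹`:
`‖(w + v₁) ∧ v₂‖ ≥ δ · |w + v₁| · |v₂|`. -/

lemma wedgeNorm_le (x y : V) (t : ℝ) : wedgeNorm x y ≤ ‖x - t • y‖ * ‖y‖ := by
  have h : ‖x‖ ^ 2 * ‖y‖ ^ 2 - ⟪x, y⟫ ^ 2 ≤ (‖x - t • y‖ * ‖y‖) ^ 2 := by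
    have e : ‖x - t • y‖ ^ 2 = ‖x‖ ^ 2 - 2 * (t * ⟪x, y⟫) + t ^ 2 * ‖y‖ ^ 2 := by
      rw [norm_sub_sq_real, real_inner_smul_right, norm_smul]
      simp [mul_pow]
    nlinarith [sq_nonneg (t * ‖y‖ ^ 2 - ⟪x, y⟫)]
  calc wedgeNorm x y ≤ Real.sqrt ((‖x - t • y‖ * ‖y‖) ^ 2) := Real.sqrt_le_sqrt h
    _ = ‖x - t • y‖ * ‖y‖ := Real.sqrt_sq (by positivity)

lemma wedgeNorm_eq (x y : V) (hy : y ≠ 0) :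
    wedgeNorm x y = ‖x - (⟪x, y⟫ / ‖y‖ ^ 2) • y‖ * ‖y‖ := by
  have hb : (0:ℝ) < ‖y‖ := norm_pos_iff.2 hy
  set t : ℝ := ⟪x, y⟫ / ‖y‖ ^ 2 with ht
  have e : ‖x - t • y‖ ^ 2 = ‖x‖ ^ 2 - 2 * (t * ⟪x, y⟫) + t ^ 2 * ‖y‖ ^ 2 := by
    rw [norm_sub_sq_real, real_inner_smul_right, norm_smul]
    simp [mul_pow]
  have key : ‖x‖ ^ 2 * ‖y‖ ^ 2 - ⟪x, y⟫ ^ 2 = (‖x - t • y‖ * ‖y‖) ^ 2 := by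
    rw [mul_pow, e, ht]
    field_simp
    ring
  rw [wedgeNorm, key, Real.sqrt_sq (by positivity)]

lemma projDist_le_wedge {w u : V} {ε : ℝ} (hε : 0 < ε) (hw : w ≠ 0) (hu : u ≠ 0)
    (h : ε ≤ projDist w u) : ε * ‖w‖ * ‖u‖ ≤ wedgeNorm w u := by
  have ha : (0:ℝ) < ‖w‖ := norm_pos_iff.2 hw
  have hb : (0:ℝ) < ‖u‖ := norm_pos_iff.2 hu
  have h2 : ε ^ 2 ≤ 1 - ⟪w, u⟫ ^ 2 / (‖w‖ ^ 2 * ‖u‖ ^ 2) := by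
    exact (Real.le_sqrt' hε).1 h
  have h3 : ⟪w, u⟫ ^ 2 ≤ (1 - ε ^ 2) * (‖w‖ ^ 2 * ‖u‖ ^ 2) := by
    have hpos : (0:ℝ) < ‖w‖ ^ 2 * ‖u‖ ^ 2 := by positivity
    rw [sub_div' hpos.ne', le_div_iff₀ hpos] at h2
    nlinarith
  rw [wedgeNorm]
  rw [show ε * ‖w‖ * ‖u‖ = Real.sqrt ((ε * ‖w‖ * ‖u‖) ^ 2) from
    (Real.sqrt_sq (by positivity)).symm]
  apply Real.sqrt_le_sqrt
  nlinarith

lemma kappa_le {s : ℕ} (E : Fin (s+1) → Submodule ℝ V) {i : ℕ} (hi : i < s)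
    {w u : V} (hw : w ∈ Whigh E i) (hw0 : w ≠ 0) (hu : u ∈ Vlow E i) (hu0 : u ≠ 0) :
    kappa E ≤ projDist w u := by
  apply csInf_le
  · refine ⟨0, fun r hr => ?_⟩
    obtain ⟨_, _, _, _, _, _, _, _, _, _, _, rfl⟩ := hr
    exact Real.sqrt_nonneg _
  · refine ⟨Finset.univ.filter (fun j : Fin (s+1) => (j : ℕ) ≤ i),
      Finset.univ.filter (fun j : Fin (s+1) => i < (j : ℕ)), w, u, ?_, ?_, ?_, ?_, hw0, ?_, hu0, rfl⟩
    · exact ⟨⟨0, Nat.succ_pos s⟩, by simp⟩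
    · exact ⟨⟨i+1, Nat.succ_lt_succ hi⟩, by simp⟩
    · rw [Finset.disjoint_left]
      intro a ha hb
      simp only [Finset.mem_filter, Finset.mem_univ, true_and] at ha hb
      omega
    · have : (⨆ j ∈ Finset.univ.filter (fun j : Fin (s+1) => (j : ℕ) ≤ i), E j)
          = Whigh E i := by
        rw [Whigh]
        refine iSup_congr fun j => ?_
        simp
      rw [this]; exact hw
    · have : (⨆ j ∈ Finset.univ.filter (fun j : Fin (s+1) => i < (j : ℕ)), E j)
          = Vlow E i := by
        rw [Vlow]
        refine iSup_congr fun j => ?_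
        simp
      rw [this]; exact hu

theorem stmt11 [FiniteDimensional ℝ V] (hdim : 2 ≤ Module.finrank ℝ V) :
    ∀ ε > (0 : ℝ), ∃ δ > (0 : ℝ), ∀ (s : ℕ) (E : Fin (s+1) → Submodule ℝ V),
      DirectSum.IsInternal E → (∀ k, E k ≠ ⊥) → ε ≤ kappa E →
      ∀ i : ℕ, i < s →
      ∀ w ∈ Whigh E i, ε ≤ ‖w‖ → ‖w‖ ≤ ε⁻¹ →
      ∀ v₁ ∈ Vlow E i, ‖v₁‖ ≤ ε⁻¹ →
      ∀ v₂ ∈ Vlow E i,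
        δ * ‖w + v₁‖ * ‖v₂‖ ≤ wedgeNorm (w + v₁) v₂ := by
  intro ε hε
  refine ⟨ε ^ 3 / 2, by positivity, ?_⟩
  intro s E _ _ hκ i hi w hw hwl hwu v₁ hv₁ hv₁n v₂ hv₂
  have hw0 : w ≠ 0 := by
    intro h; rw [h, norm_zero] at hwl; linarith
  have hε1 : ε ≤ 1 := by
    have h' : ε ≤ ε⁻¹ := le_trans hwl hwu
    have h'' : ε * ε ≤ 1 := by
      have := mul_le_mul_of_nonneg_left h' hε.le
      rwa [mul_inv_cancel₀ hε.ne'] at this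
    nlinarith
  -- key: distance from w to any element of Vlow is at least ε^2
  have key : ∀ u ∈ Vlow E i, ε ^ 2 ≤ ‖w - u‖ := by
    intro u hu
    by_cases hu0 : u = 0
    · rw [hu0, sub_zero]
      nlinarith
    · have h1 : ε ≤ projDist w u := le_trans hκ (kappa_le E hi hw hw0 hu hu0)
      have h2 : ε * ‖w‖ * ‖u‖ ≤ wedgeNorm w u := projDist_le_wedge hε hw0 hu0 h1
      have h3 : wedgeNorm w u ≤ ‖w - u‖ * ‖u‖ := by
        have := wedgeNorm_le w u 1
        rwa [one_smul] at this
      have hbu : (0:ℝ) < ‖u‖ := norm_pos_iff.2 hu0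
      have h4 : ε * ‖w‖ ≤ ‖w - u‖ :=
        le_of_mul_le_mul_right (le_trans h2 h3) hbu
      nlinarith
  by_cases hv20 : v₂ = 0
  · rw [hv20]
    simp [wedgeNorm]
  · set x := w + v₁ with hx
    set t : ℝ := ⟪x, v₂⟫ / ‖v₂‖ ^ 2 with htd
    have hmem : t • v₂ - v₁ ∈ Vlow E i := Submodule.sub_mem _ (Submodule.smul_mem _ _ hv₂) hv₁
    have hxe : x - t • v₂ = w - (t • v₂ - v₁) := by rw [hx]; abel
    have h5 : ε ^ 2 ≤ ‖x - t • v₂‖ := by rw [hxe]; exact key _ hmem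
    have h6 : wedgeNorm x v₂ = ‖x - t • v₂‖ * ‖v₂‖ := wedgeNorm_eq x v₂ hv20
    have hxb : ‖x‖ ≤ 2 * ε⁻¹ := by
      calc ‖x‖ ≤ ‖w‖ + ‖v₁‖ := norm_add_le _ _
        _ ≤ ε⁻¹ + ε⁻¹ := add_le_add hwu hv₁n
        _ = 2 * ε⁻¹ := by ring
    have hδ : ε ^ 3 / 2 * ‖x‖ ≤ ε ^ 2 := by
      calc ε ^ 3 / 2 * ‖x‖ ≤ ε ^ 3 / 2 * (2 * ε⁻¹) := by
            apply mul_le_mul_of_nonneg_left hxb (by positivity)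
        _ = ε ^ 2 := by field_simp
    rw [h6]
    have hv2n : (0:ℝ) ≤ ‖v₂‖ := norm_nonneg _
    calc ε ^ 3 / 2 * ‖x‖ * ‖v₂‖ ≤ ε ^ 2 * ‖v₂‖ := mul_le_mul_of_nonneg_right hδ hv2n
      _ ≤ ‖x - t • v₂‖ * ‖v₂‖ := mul_le_mul_of_nonneg_right h5 hv2n
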